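/- Let S : ℝⁿ ⇉ ℝᵐ be a set-valued mapping whose graph is a union of finitely many polyhedral convex sets, and let Q ⊆ dom S be convex. Suppose S is calm on Q with constant κ, i.e., for every q ∈ Q there is ρ_q > 0 with S(q') ⊆ S(q) + κ‖q' − q‖𝔹 for all q' ∈ Q ∩ 𝔹_{ρ_q}(q). If S is inner semicontinuous around (q̄, x̄) ∈ graph S relative to Q, then S is Lipschitz-like relative to Q at q̄ for x̄ with modulus κ. -/

import Mathlib

open Topology

noncomputable section

variable {n m : ℕ}

/-- A polyhedral convex subset of the product `ℝⁿ × ℝᵐ`. -/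
def IsPolyhedralProd {n m : ℕ}
    (P : Set (EuclideanSpace ℝ (Fin n) × EuclideanSpace ℝ (Fin m))) : Prop :=
  ∃ (k : ℕ) (a : Fin k → EuclideanSpace ℝ (Fin n)) (b : Fin k → EuclideanSpace ℝ (Fin m))
    (c : Fin k → ℝ),
    P = {p | ∀ i, (inner ℝ (a i) p.1 : ℝ) + (inner ℝ (b i) p.2 : ℝ) ≤ c i}

lemma IsPolyhedralProd.isClosed {n m : ℕ}
    {P : Set (EuclideanSpace ℝ (Fin n) × EuclideanSpace ℝ (Fin m))}
    (h : IsPolyhedralProd P) : IsClosed P := by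
  obtain ⟨k, a, b, c, rfl⟩ := h
  have hEq : {p : EuclideanSpace ℝ (Fin n) × EuclideanSpace ℝ (Fin m) |
      ∀ i, (inner ℝ (a i) p.1 : ℝ) + (inner ℝ (b i) p.2 : ℝ) ≤ c i}
      = ⋂ i, {p : EuclideanSpace ℝ (Fin n) × EuclideanSpace ℝ (Fin m) |
        (inner ℝ (a i) p.1 : ℝ) + (inner ℝ (b i) p.2 : ℝ) ≤ c i} := by
    ext p; simp
  rw [hEq]
  refine isClosed_iInter fun i => isClosed_le ?_ continuous_const
  exact ((continuous_const.inner continuous_fst)).add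
    ((continuous_const.inner continuous_snd))

lemma infDist_transfer {E : Type*} [NormedAddCommGroup E]
    (z : E) {A B : Set E} (hB : B.Nonempty) {c : ℝ}
    (h : ∀ x ∈ B, ∃ s ∈ A, ‖x - s‖ ≤ c) :
    Metric.infDist z A ≤ Metric.infDist z B + c := by
  refine le_of_forall_pos_le_add fun η hη => ?_
  obtain ⟨x, hxB, hx⟩ := (Metric.infDist_lt_iff hB).1
    (lt_add_of_pos_right (Metric.infDist z B) hη)
  obtain ⟨s, hsA, hs⟩ := h x hxB
  calc Metric.infDist z A ≤ dist z s := Metric.infDist_le_dist_of_mem hsA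
    _ ≤ dist z x + dist x s := dist_triangle _ _ _
    _ ≤ (Metric.infDist z B + η) + c := add_le_add hx.le (by rwa [dist_eq_norm])
    _ = Metric.infDist z B + c + η := by ring

set_option maxHeartbeats 1000000 in
/-- for a polyhedral multifunction calm on a convex `Q ⊆ dom S` with
constant `κ`, inner semicontinuity around `(q̄, x̄)` relative to `Q` implies the
Lipschitz-like property relative to `Q` at `q̄` for `x̄` with modulus `κ`. -/
theorem stmt15 (S : EuclideanSpace ℝ (Fin n) → Set (EuclideanSpace ℝ (Fin m)))
    (hpoly : ∃ (N : ℕ) (P : Fin N → Set (EuclideanSpace ℝ (Fin n) × EuclideanSpace ℝ (Fin m))),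
      (∀ i, IsPolyhedralProd (P i)) ∧ {p | p.2 ∈ S p.1} = ⋃ i, P i)
    (Q : Set (EuclideanSpace ℝ (Fin n))) (hQconv : Convex ℝ Q)
    (hQdom : Q ⊆ {q | (S q).Nonempty})
    (κ : ℝ) (hκ : 0 ≤ κ)
    (hcalm : ∀ q ∈ Q, ∃ ρ > (0:ℝ), ∀ q' ∈ Q, ‖q' - q‖ ≤ ρ →
      S q' ⊆ {z | ∃ s ∈ S q, ‖z - s‖ ≤ κ * ‖q' - q‖})
    (q0 : EuclideanSpace ℝ (Fin n)) (x0 : EuclideanSpace ℝ (Fin m))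
    (hq0 : q0 ∈ Q) (hx0 : x0 ∈ S q0)
    (hisc : ∃ V ∈ 𝓝 q0, ∃ W ∈ 𝓝 x0, ∀ q ∈ Q ∩ V,
      ∀ O : Set (EuclideanSpace ℝ (Fin m)), IsOpen O → (S q ∩ W ∩ O).Nonempty →
        ∃ V' ∈ 𝓝 q, ∀ q' ∈ Q ∩ V', (S q' ∩ O).Nonempty) :
    ∃ V ∈ 𝓝 q0, ∃ W ∈ 𝓝 x0, ∀ q ∈ Q ∩ V, ∀ q' ∈ Q ∩ V,
      S q ∩ W ⊆ {z | ∃ s ∈ S q', ‖z - s‖ ≤ κ * ‖q - q'‖} := by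
  obtain ⟨V, hV, W, hW, hisc'⟩ := hisc
  obtain ⟨r, hr, hrW⟩ := Metric.mem_nhds_iff.1 hW
  obtain ⟨δ₀, hδ₀, hδ₀V⟩ := Metric.mem_nhds_iff.1 hV
  set δ : ℝ := min δ₀ (r / (16 * (κ + 1))) with hδdef
  have hδpos : 0 < δ := lt_min hδ₀ (by positivity)
  have hδle : δ ≤ r / (16 * (κ + 1)) := min_le_right _ _
  have hκ1 : (0:ℝ) < κ + 1 := by linarith
  refine ⟨Metric.ball q0 δ, Metric.ball_mem_nhds _ hδpos,
    Metric.ball x0 (r/2), Metric.ball_mem_nhds _ (by linarith), ?_⟩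
  rintro q ⟨hqQ, hqB⟩ q' ⟨hq'Q, hq'B⟩ z ⟨hzS, hzB⟩
  -- closed fibers
  have hclosed : ∀ u, IsClosed (S u) := by
    obtain ⟨N, P, hP, hgraph⟩ := hpoly
    intro u
    have hG : IsClosed {p : EuclideanSpace ℝ (Fin n) × EuclideanSpace ℝ (Fin m) |
        p.2 ∈ S p.1} := by
      rw [hgraph]
      exact isClosed_iUnion_of_finite fun i => (hP i).isClosed
    have hSu : S u = (fun x => (u, x)) ⁻¹'
        {p : EuclideanSpace ℝ (Fin n) × EuclideanSpace ℝ (Fin m) | p.2 ∈ S p.1} := rfl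
    rw [hSu]
    exact hG.preimage (Continuous.prodMk_right u)
  set d : ℝ := ‖q - q'‖ with hd
  have hd0 : 0 ≤ d := norm_nonneg _
  have hd2δ : d < 2 * δ := by
    have h1 : dist q q0 < δ := hqB
    have h2 : dist q' q0 < δ := hq'B
    have h3 : dist q q' ≤ dist q q0 + dist q0 q' := dist_triangle _ _ _
    have h4 : dist q0 q' = dist q' q0 := dist_comm _ _
    have h5 : d = dist q q' := (dist_eq_norm _ _).symm
    linarith
  have hκd : κ * d ≤ r / 8 := by
    have h1 : κ * d ≤ (κ + 1) * (2 * δ) := by nlinarith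
    have h2 : (κ + 1) * (2 * δ) ≤ (κ + 1) * (2 * (r / (16 * (κ + 1)))) := by nlinarith
    have h3 : (κ + 1) * (2 * (r / (16 * (κ + 1)))) = r / 8 := by field_simp; ring
    linarith
  set σ : ℝ → EuclideanSpace ℝ (Fin n) := fun t => q + t • (q' - q) with hσ
  have hσnorm : ∀ s t : ℝ, ‖σ s - σ t‖ = |s - t| * d := by
    intro s t
    have h1 : σ s - σ t = (s - t) • (q' - q) := by
      simp only [hσ]
      rw [add_sub_add_left_eq_sub, ← sub_smul]
    rw [h1, norm_smul, Real.norm_eq_abs, norm_sub_rev]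
  have hσcvx : ∀ t : ℝ, σ t = (1 - t) • q + t • q' := by
    intro t
    simp only [hσ]
    rw [sub_smul, one_smul, smul_sub]
    abel
  have hσQ : ∀ t ∈ Set.Icc (0:ℝ) 1, σ t ∈ Q := by
    intro t ht
    rw [hσcvx]
    exact hQconv hqQ hq'Q (by linarith [ht.2]) ht.1 (by ring)
  have hσball : ∀ t ∈ Set.Icc (0:ℝ) 1, σ t ∈ Metric.ball q0 δ := by
    intro t ht
    rw [hσcvx]
    exact (convex_ball q0 δ) hqB hq'B (by linarith [ht.2]) ht.1 (by ring)
  have hσV : ∀ t ∈ Set.Icc (0:ℝ) 1, σ t ∈ V := by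
    intro t ht
    apply hδ₀V
    exact Metric.ball_subset_ball (min_le_left _ _) (hσball t ht)
  have hσ0 : σ 0 = q := by simp [hσ]
  have hσ1 : σ 1 = q' := by simp [hσ]
  -- key claim
  have key : ∀ ε : ℝ, 0 < ε → ε ≤ r / 8 → Metric.infDist z (S q') < κ * d + ε := by
    intro ε hε hε8
    set A : Set ℝ := {t | t ∈ Set.Icc (0:ℝ) 1 ∧
      Metric.infDist z (S (σ t)) < κ * d * t + ε} with hA
    have h0A : (0:ℝ) ∈ A := by
      refine ⟨⟨le_refl _, zero_le_one⟩, ?_⟩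
      rw [hσ0, Metric.infDist_zero_of_mem hzS]
      simp only [mul_zero, zero_add]
      exact hε
    have hAne : A.Nonempty := ⟨0, h0A⟩
    have hAbdd : BddAbove A := ⟨1, fun t ht => ht.1.2⟩
    set T : ℝ := sSup A with hT
    have hT0 : 0 ≤ T := le_csSup hAbdd h0A
    have hT1 : T ≤ 1 := csSup_le hAne fun t ht => ht.1.2
    have hTIcc : T ∈ Set.Icc (0:ℝ) 1 := ⟨hT0, hT1⟩
    have hTA : T ∈ A := by
      obtain ⟨ρ, hρ, hcalmT⟩ := hcalm (σ T) (hσQ T hTIcc)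
      have hlt : T - ρ / (d + 1) < T := by
        have : 0 < ρ / (d + 1) := by positivity
        linarith
      obtain ⟨t, htA, htlt⟩ := exists_lt_of_lt_csSup hAne hlt
      have htT : t ≤ T := le_csSup hAbdd htA
      have hnear : ‖σ t - σ T‖ ≤ ρ := by
        rw [hσnorm, abs_of_nonpos (by linarith), neg_sub]
        have h1 : (T - t) * d ≤ (ρ / (d + 1)) * d := by nlinarith
        have h2 : (ρ / (d + 1)) * d ≤ ρ := by
          rw [div_mul_eq_mul_div, div_le_iff₀ (by linarith)]
          nlinarith
        linarith
      have hsub := hcalmT (σ t) (hσQ t htA.1) hnear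
      have htrans := infDist_transfer z (hQdom (hσQ t htA.1))
        (fun x hx => hsub hx)
      have hnorm : κ * ‖σ t - σ T‖ = κ * d * T - κ * d * t := by
        rw [hσnorm, abs_of_nonpos (by linarith), neg_sub]
        ring
      refine ⟨hTIcc, ?_⟩
      have := htA.2
      linarith [htrans, hnorm ▸ htrans]
    have hTeq1 : T = 1 := by
      by_contra hne
      have hTlt : T < 1 := lt_of_le_of_ne hT1 hne
      set fT : ℝ := Metric.infDist z (S (σ T)) with hfT
      have hslack : 0 < κ * d * T + ε - fT := by linarith [hTA.2]
      set s0 : ℝ := κ * d * T + ε - fT with hs0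
      set ε' : ℝ := min (s0 / 2) (r / 8) with hε'def
      have hε'pos : 0 < ε' := lt_min (by linarith) (by linarith)
      have hfTnn : 0 ≤ fT := Metric.infDist_nonneg
      obtain ⟨xT, hxT, hxTd⟩ := (Metric.infDist_lt_iff (hQdom (hσQ T hTIcc))).1
        (show fT < fT + ε' by linarith)
      have hκd0 : 0 ≤ κ * d := mul_nonneg hκ hd0
      have hκdT : κ * d * T ≤ κ * d := by nlinarith [hκd0]
      have hxTW : xT ∈ W := by
        apply hrW
        have h1 : dist xT x0 ≤ dist xT z + dist z x0 := dist_triangle _ _ _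
        have h2 : dist xT z = dist z xT := dist_comm _ _
        have h3 : dist z x0 < r / 2 := hzB
        have h4 : fT < r / 4 := by linarith [hTA.2]
        have h5 : ε' ≤ r / 8 := min_le_right _ _
        simp only [Metric.mem_ball]
        linarith
      obtain ⟨V', hV', hV'prop⟩ := hisc' (σ T) ⟨hσQ T hTIcc, hσV T hTIcc⟩
        (Metric.ball xT (s0 / 2)) Metric.isOpen_ball
        ⟨xT, ⟨hxT, hxTW⟩, Metric.mem_ball_self (by linarith)⟩
      obtain ⟨η, hη, hηV'⟩ := Metric.mem_nhds_iff.1 hV'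
      set t : ℝ := min 1 (T + η / (2 * (d + 1))) with htdef
      have htT : T < t := by
        apply lt_min hTlt
        have : 0 < η / (2 * (d + 1)) := by positivity
        linarith
      have ht1 : t ≤ 1 := min_le_left _ _
      have htIcc : t ∈ Set.Icc (0:ℝ) 1 := ⟨by linarith, ht1⟩
      have hσtV' : σ t ∈ V' := by
        apply hηV'
        rw [Metric.mem_ball, dist_eq_norm, hσnorm, abs_of_nonneg (by linarith)]
        have h1 : t ≤ T + η / (2 * (d + 1)) := min_le_right _ _
        have h2 : (t - T) * d ≤ (η / (2 * (d + 1))) * d := by nlinarith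
        have h3 : (η / (2 * (d + 1))) * d ≤ η / 2 := by
          rw [div_mul_eq_mul_div, div_le_div_iff₀ (by linarith) (by norm_num)]
          nlinarith
        linarith
      obtain ⟨xt, hxtS, hxtB⟩ := hV'prop (σ t) ⟨hσQ t htIcc, hσtV'⟩
      have hmem : t ∈ A := by
        refine ⟨htIcc, ?_⟩
        have h1 : Metric.infDist z (S (σ t)) ≤ dist z xt :=
          Metric.infDist_le_dist_of_mem hxtS
        have h2 : dist z xt ≤ dist z xT + dist xT xt := dist_triangle _ _ _
        have h3 : dist xT xt < s0 / 2 := by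
          rw [dist_comm]; exact hxtB
        have h4 : ε' ≤ s0 / 2 := min_le_left _ _
        have h5 : κ * d * T ≤ κ * d * t := by nlinarith [hκd0]
        have h6 : fT + s0 = κ * d * T + ε := by rw [hs0]; ring
        linarith
      exact absurd (le_csSup hAbdd hmem) (not_le.2 htT)
    have := hTA.2
    rw [hTeq1, hσ1, mul_one] at this
    exact this
  -- conclude
  have hinf : Metric.infDist z (S q') ≤ κ * d := by
    by_contra h
    push_neg at h
    have hεpos : 0 < min (r / 8) (Metric.infDist z (S q') - κ * d) :=
      lt_min (by linarith) (by linarith)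
    have := key _ hεpos (min_le_left _ _)
    have h2 : min (r / 8) (Metric.infDist z (S q') - κ * d) ≤
        Metric.infDist z (S q') - κ * d := min_le_right _ _
    linarith
  obtain ⟨s, hs, hds⟩ := (hclosed q').exists_infDist_eq_dist (hQdom hq'Q) z
  exact ⟨s, hs, by rw [← dist_eq_norm, ← hds]; exact hinf⟩
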